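/- Fix k ∈ ℕ, u ∈ B_R and v ∈ B_R with q(u) > 0 and q(v) > 0. Then the probability (over the noise (Z_i)) that v belongs to the support S_k of the smoother equals ∏_{i=0}^{k} ∏_{j=1}^{d_o} max(0, 1 − |(H Ψ_{t_i}(u))_j − (H Ψ_{t_i}(v))_j| / (2ε)). -/

import Mathlib

open MeasureTheory ProbabilityTheory Set
open scoped ENNReal

noncomputable section

/-- The ℓ¹ norm on `ℝ^n`. -/
def norm1 {n : ℕ} (x : EuclideanSpace ℝ (Fin n)) : ℝ := ∑ j, |x j|

/-- The supremum norm on `ℝ^n`. -/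
def normInf {n : ℕ} (x : EuclideanSpace ℝ (Fin n)) : ℝ := ⨆ j, |x j|

/-- The support of the smoothing distribution after observations `Y_0, …, Y_k`,
where `Y_i = H Ψ_{t_i}(u) + Z_i(ω)`, `t_i = i h`, and the noise is uniform on
`[-ε, ε]^{d_o}`:  the set of `x ∈ B_R` with `q(x) > 0` and
`‖H Ψ_{t_i}(x) - Y_i‖_∞ ≤ ε` for all `0 ≤ i ≤ k`. -/
def smootherSupp {d dO : ℕ} {Ω : Type*}
    (Ψ : ℝ → EuclideanSpace ℝ (Fin d) → EuclideanSpace ℝ (Fin d))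
    (H : EuclideanSpace ℝ (Fin d) →L[ℝ] EuclideanSpace ℝ (Fin dO))
    (q : EuclideanSpace ℝ (Fin d) → ℝ) (R h ε : ℝ)
    (u : EuclideanSpace ℝ (Fin d)) (Z : ℕ → Ω → EuclideanSpace ℝ (Fin dO))
    (k : ℕ) (ω : Ω) : Set (EuclideanSpace ℝ (Fin d)) :=
  {x | ‖x‖ ≤ R ∧ 0 < q x ∧
    ∀ i ≤ k, normInf (H (Ψ (i * h) x) - (H (Ψ (i * h) u) + Z i ω)) ≤ ε}

lemma normInf_le_iff' {n : ℕ} (x : EuclideanSpace ℝ (Fin n)) {ε : ℝ} (hε : 0 ≤ ε) :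
    normInf x ≤ ε ↔ ∀ j, |x j| ≤ ε := by
  unfold normInf
  constructor
  · intro hle j
    exact le_trans (le_ciSup (f := fun j => |x j|) (Set.Finite.bddAbove (Set.finite_range _)) j) hle
  · intro hj
    rcases isEmpty_or_nonempty (Fin n) with hn | hn
    · simpa [Real.iSup_of_isEmpty] using hε
    · exact ciSup_le hj

lemma interval_len (a ε : ℝ) (hε : 0 ≤ ε) :
    min (a + ε) ε - max (a - ε) (-ε) = 2 * ε - |a| := by
  rcases le_total 0 a with hA | hA
  · rw [abs_of_nonneg hA, min_eq_right (by linarith), max_eq_left (by linarith)]; ring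
  · rw [abs_of_nonpos hA, min_eq_left (by linarith), max_eq_right (by linarith)]; ring

lemma mem_box_iff (a ε z : ℝ) :
    (|z - a| ≤ ε ∧ |z| ≤ ε) ↔ z ∈ Set.Icc (max (a - ε) (-ε)) (min (a + ε) ε) := by
  rw [abs_le, abs_le, Set.mem_Icc, max_le_iff, le_min_iff]
  constructor
  · rintro ⟨⟨h1, h2⟩, h3, h4⟩
    exact ⟨⟨by linarith, by linarith⟩, by linarith, by linarith⟩
  · rintro ⟨⟨h1, h2⟩, h3, h4⟩
    exact ⟨⟨by linarith, by linarith⟩, by linarith, by linarith⟩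

lemma ofReal_max_zero (x : ℝ) : ENNReal.ofReal (max 0 x) = ENNReal.ofReal x := by
  rcases le_total 0 x with hx | hx
  · rw [max_eq_right hx]
  · rw [max_eq_left hx, ENNReal.ofReal_of_nonpos hx, ENNReal.ofReal_zero]

/-- exact formula for the probability that a fixed point `v ∈ B_R`
(with `q(v) > 0`) belongs to the support of the smoother, for uniform
observation noise on `[-ε, ε]^{d_o}`. -/
theorem prob_in_smoother_support {d dO : ℕ}
    (A : EuclideanSpace ℝ (Fin d) →L[ℝ] EuclideanSpace ℝ (Fin d))
    (B : EuclideanSpace ℝ (Fin d) →L[ℝ] EuclideanSpace ℝ (Fin d) →L[ℝ] EuclideanSpace ℝ (Fin d))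
    (f : EuclideanSpace ℝ (Fin d))
    (R δ : ℝ) (hR : 0 < R) (hδ : 0 < δ)
    (htrap : ∀ x : EuclideanSpace ℝ (Fin d),
      ‖x‖ ∈ Icc R (R + δ) → (inner ℝ (f - A x - B x x) x : ℝ) ≤ 0)
    (Ψ : ℝ → EuclideanSpace ℝ (Fin d) → EuclideanSpace ℝ (Fin d))
    (hΨ0 : ∀ x, ‖x‖ ≤ R → Ψ 0 x = x)
    (hΨR : ∀ x, ‖x‖ ≤ R → ∀ t : ℝ, 0 ≤ t → ‖Ψ t x‖ ≤ R)
    (hΨode : ∀ x, ‖x‖ ≤ R → ∀ t : ℝ, 0 ≤ t →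
      HasDerivWithinAt (fun s => Ψ s x)
        (f - A (Ψ t x) - B (Ψ t x) (Ψ t x)) (Ici 0) t)
    (h : ℝ) (hh : 0 < h)
    (H : EuclideanSpace ℝ (Fin d) →L[ℝ] EuclideanSpace ℝ (Fin dO))
    (ε : ℝ) (hε : 0 < ε)
    (Ω : Type*) [MeasurableSpace Ω] (μ : Measure Ω) [IsProbabilityMeasure μ]
    (Z : ℕ → Ω → EuclideanSpace ℝ (Fin dO))
    (hZmeas : ∀ i, Measurable (Z i))
    (hZindep : iIndepFun Z μ)
    (hZlaw : ∀ i, Measure.map (Z i) μ =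
      (ENNReal.ofReal ((2 * ε) ^ dO))⁻¹ •
        volume.restrict {z : EuclideanSpace ℝ (Fin dO) | ∀ j, |z j| ≤ ε})
    (q : EuclideanSpace ℝ (Fin d) → ℝ) (hq : ∀ x, 0 ≤ q x)
    (hqsupp : ∀ x : EuclideanSpace ℝ (Fin d), ¬ ‖x‖ ≤ R → q x = 0)
    (u : EuclideanSpace ℝ (Fin d)) (hu : ‖u‖ ≤ R) (hqu : 0 < q u)
    (v : EuclideanSpace ℝ (Fin d)) (hv : ‖v‖ ≤ R) (hqv : 0 < q v)
    (k : ℕ) :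
    μ {ω | v ∈ smootherSupp Ψ H q R h ε u Z k ω} =
      ENNReal.ofReal (∏ i ∈ Finset.range (k + 1), ∏ j : Fin dO,
        max 0 (1 - |H (Ψ (i * h) u) j - H (Ψ (i * h) v) j| / (2 * ε))) := by

  have h2e : (0:ℝ) < 2 * ε := by linarith
  set a : ℕ → Fin dO → ℝ := fun i j => H (Ψ (i * h) v) j - H (Ψ (i * h) u) j with ha
  set S : ℕ → Set (EuclideanSpace ℝ (Fin dO)) :=
    fun i => {z | ∀ j, |z j - a i j| ≤ ε} with hSdef
  have hSmeas : ∀ i, MeasurableSet (S i) := by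
    intro i
    have : S i = ⋂ j, {z : EuclideanSpace ℝ (Fin dO) | |z j - a i j| ≤ ε} := by
      ext z; simp [hSdef]
    rw [this]
    refine MeasurableSet.iInter fun j => ?_
    have hm : Measurable fun z : EuclideanSpace ℝ (Fin dO) => z j :=
      (EuclideanSpace.proj (𝕜 := ℝ) j).continuous.measurable
    exact measurableSet_le ((hm.sub measurable_const).abs) measurable_const
  have key : ∀ (z : EuclideanSpace ℝ (Fin dO)) (i : ℕ) (j : Fin dO),
      |(H (Ψ (i * h) v) - (H (Ψ (i * h) u) + z)) j| = |z j - a i j| := by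
    intro z i j
    have h1 : (H (Ψ (i * h) v) - (H (Ψ (i * h) u) + z)) j = -(z j - a i j) := by
      simp [ha, PiLp.sub_apply, PiLp.add_apply]; ring
    rw [h1, abs_neg]
  have hev : {ω | v ∈ smootherSupp Ψ H q R h ε u Z k ω}
      = ⋂ i ∈ Finset.range (k + 1), Z i ⁻¹' S i := by
    ext ω
    simp only [smootherSupp, Set.mem_setOf_eq, Set.mem_iInter, Set.mem_preimage,
      Finset.mem_range, Nat.lt_succ_iff]
    constructor
    · rintro ⟨-, -, hcond⟩ i hi
      intro j
      have hj := (normInf_le_iff' _ hε.le).1 (hcond i hi) j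
      rwa [key (Z i ω) i j] at hj
    · intro hcond
      refine ⟨hv, hqv, fun i hi => ?_⟩
      rw [normInf_le_iff' _ hε.le]
      intro j
      rw [key (Z i ω) i j]
      exact hcond i hi j
  have hone : ∀ i : ℕ, μ (Z i ⁻¹' S i) =
      ENNReal.ofReal (∏ j : Fin dO,
        max 0 (1 - |H (Ψ (i * h) u) j - H (Ψ (i * h) v) j| / (2 * ε))) := by
    intro i
    rw [← Measure.map_apply (hZmeas i) (hSmeas i), hZlaw i, Measure.smul_apply,
      Measure.restrict_apply (hSmeas i), smul_eq_mul]
    have hbox : S i ∩ {z : EuclideanSpace ℝ (Fin dO) | ∀ j, |z j| ≤ ε}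
        = (MeasurableEquiv.toLp 2 (Fin dO → ℝ)).symm ⁻¹'
          (Set.univ.pi fun j => Set.Icc (max (a i j - ε) (-ε)) (min (a i j + ε) ε)) := by
      ext z
      simp only [hSdef, Set.mem_inter_iff, Set.mem_setOf_eq, Set.mem_preimage,
        Set.mem_pi, Set.mem_univ, forall_true_left]
      constructor
      · rintro ⟨h1, h2⟩ j
        exact (mem_box_iff (a i j) ε (z j)).1 ⟨h1 j, h2 j⟩
      · intro hz
        exact ⟨fun j => ((mem_box_iff (a i j) ε (z j)).2 (hz j)).1,
               fun j => ((mem_box_iff (a i j) ε (z j)).2 (hz j)).2⟩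
    rw [hbox, (EuclideanSpace.volume_preserving_symm_measurableEquiv_toLp (Fin dO)).measure_preimage
      ((MeasurableSet.univ_pi fun j => measurableSet_Icc).nullMeasurableSet),
      volume_pi_pi]
    simp only [Real.volume_Icc]
    have hfac : ∀ j : Fin dO,
        ENNReal.ofReal (min (a i j + ε) ε - max (a i j - ε) (-ε))
          = ENNReal.ofReal (2 * ε) * ENNReal.ofReal (max 0 (1 - |a i j| / (2 * ε))) := by
      intro j
      rw [interval_len _ _ hε.le, ← ofReal_max_zero (2 * ε - |a i j|),
        ← ENNReal.ofReal_mul h2e.le]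
      congr 1
      rw [mul_max_of_nonneg _ _ h2e.le, mul_zero]
      congr 1
      field_simp
    rw [Finset.prod_congr rfl fun j _ => hfac j, Finset.prod_mul_distrib,
      Finset.prod_const, Finset.card_univ, Fintype.card_fin,
      ENNReal.ofReal_pow h2e.le, ← mul_assoc,
      ENNReal.inv_mul_cancel (pow_ne_zero _ (ENNReal.ofReal_pos.2 h2e).ne')
        (ENNReal.pow_ne_top ENNReal.ofReal_ne_top), one_mul,
      ← ENNReal.ofReal_prod_of_nonneg (fun j _ => le_max_left _ _)]
    congr 1
    refine Finset.prod_congr rfl fun j _ => ?_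
    rw [ha]
    rw [abs_sub_comm]
  rw [hev, hZindep.meas_biInter (fun i _ => ⟨S i, hSmeas i, rfl⟩)]
  rw [Finset.prod_congr rfl fun i _ => hone i]
  rw [← ENNReal.ofReal_prod_of_nonneg]
  intro i _
  exact Finset.prod_nonneg fun j _ => le_max_left _ _
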